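/- Let m > 0, ε > 0 and k ≠ 0 be real. Then the local-interaction linear-stability matrix A₀(k) has an eigenvalue σ ∈ ℂ with Re σ > 0 if and only if m < 1. Moreover, when 0 < m < 1 there is exactly one such eigenvalue, and it is real and positive; when m ≥ 1 every eigenvalue of A₀(k) has nonpositive real part. -/

import Mathlib

/-- The local-interaction (`δ → 0`) linear-stability matrix `A₀(k)` for parameters
`m, ε` and wavenumber `k`:
`A₀(k) = [[a,0,0,c],[0,a,c,0],[d,0,−b,0],[0,d,0,−b]]` with
`a = (1/(1+m)² − 1)k²`, `b = (1+m)/ε`, `c = −2(2 − 1/(1+m))k²`, `d = m/(ε(1+m))`. -/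
noncomputable def A0 (m ε k : ℝ) : Matrix (Fin 4) (Fin 4) ℝ :=
  !![(1 / (1 + m) ^ 2 - 1) * k ^ 2, 0, 0, -2 * (2 - 1 / (1 + m)) * k ^ 2;
     0, (1 / (1 + m) ^ 2 - 1) * k ^ 2, -2 * (2 - 1 / (1 + m)) * k ^ 2, 0;
     m / (ε * (1 + m)), 0, -((1 + m) / ε), 0;
     0, m / (ε * (1 + m)), 0, -((1 + m) / ε)]

/-- `σ ∈ ℂ` is an eigenvalue of the real matrix `M`. -/
def IsEigC (M : Matrix (Fin 4) (Fin 4) ℝ) (σ : ℂ) : Prop :=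
  (M.map (fun x : ℝ => (x : ℂ)) - σ • 1).det = 0

private lemma det4 (a b c d σ : ℂ) :
    Matrix.det !![a - σ, 0, 0, c; 0, a - σ, c, 0; d, 0, -b - σ, 0; 0, d, 0, -b - σ]
      = (σ^2 + (b-a)*σ + (-(a*b) - c*d)) * (σ^2 + (b-a)*σ + (-(a*b) + c*d)) := by
  simp [Matrix.det_succ_row_zero, Fin.sum_univ_succ,
    show (Fin.castSucc (2:Fin 3)) = (2:Fin 4) from rfl,
    show Fin.succAbove (3:Fin 4) (2:Fin 3) = (2:Fin 4) by decide]
  ring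

private lemma quad_im (B : ℝ) (hB : 0 < B) (C : ℝ) (σ : ℂ)
    (h : σ^2 + (B:ℂ)*σ + (C:ℂ) = 0) (hre : 0 < σ.re) : σ.im = 0 := by
  have h2 : (σ^2 + (B:ℂ)*σ + (C:ℂ)).im = 0 := by rw [h]; simp
  simp [pow_two, Complex.add_im, Complex.mul_im] at h2
  nlinarith [h2]

private lemma quad_re_nonpos (B C : ℝ) (hB : 0 < B) (hC : 0 ≤ C) (σ : ℂ)
    (h : σ^2 + (B:ℂ)*σ + (C:ℂ) = 0) : σ.re ≤ 0 := by
  by_contra hx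
  push_neg at hx
  have him := quad_im B hB C σ h hx
  have h1 : (σ^2 + (B:ℂ)*σ + (C:ℂ)).re = 0 := by rw [h]; simp
  simp [pow_two, Complex.add_re, Complex.mul_re, him] at h1
  nlinarith

private lemma quad_pos_root (B C : ℝ) (hB : 0 < B) (hC : C < 0) :
    ∃ x : ℝ, 0 < x ∧ x^2 + B*x + C = 0 := by
  have hd : (0:ℝ) ≤ B^2 - 4*C := by nlinarith
  have hs : Real.sqrt (B^2 - 4*C) ^ 2 = B^2 - 4*C := Real.sq_sqrt hd
  have hs0 : 0 ≤ Real.sqrt (B^2 - 4*C) := Real.sqrt_nonneg _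
  refine ⟨(-B + Real.sqrt (B^2 - 4*C))/2, ?_, ?_⟩
  · nlinarith
  · nlinarith [hs]

private lemma quad_root_unique (B C : ℝ) (hB : 0 < B) (σ₁ σ₂ : ℂ)
    (h₁ : σ₁^2 + (B:ℂ)*σ₁ + (C:ℂ) = 0) (h₂ : σ₂^2 + (B:ℂ)*σ₂ + (C:ℂ) = 0)
    (hr₁ : 0 < σ₁.re) (hr₂ : 0 < σ₂.re) : σ₁ = σ₂ := by
  have hi₁ := quad_im B hB C σ₁ h₁ hr₁
  have hi₂ := quad_im B hB C σ₂ h₂ hr₂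
  have e₁ : (σ₁^2 + (B:ℂ)*σ₁ + (C:ℂ)).re = 0 := by rw [h₁]; simp
  have e₂ : (σ₂^2 + (B:ℂ)*σ₂ + (C:ℂ)).re = 0 := by rw [h₂]; simp
  simp [pow_two, Complex.add_re, Complex.mul_re, hi₁] at e₁
  simp [pow_two, Complex.add_re, Complex.mul_re, hi₂] at e₂
  have key : (σ₁.re - σ₂.re) * (σ₁.re + σ₂.re + B) = 0 := by nlinarith [e₁, e₂]
  have hre : σ₁.re = σ₂.re := by
    rcases mul_eq_zero.1 key with h | h
    · linarith
    · linarith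
  exact Complex.ext hre (by rw [hi₁, hi₂])

private noncomputable def aa (m k : ℝ) : ℝ := (1 / (1 + m) ^ 2 - 1) * k ^ 2
private noncomputable def bb (m ε : ℝ) : ℝ := (1 + m) / ε
private noncomputable def cc (m k : ℝ) : ℝ := -2 * (2 - 1 / (1 + m)) * k ^ 2
private noncomputable def dd (m ε : ℝ) : ℝ := m / (ε * (1 + m))

private lemma matrix_eq (m ε k : ℝ) (σ : ℂ) :
    (A0 m ε k).map (fun x : ℝ => (x : ℂ)) - σ • 1 =
      !![(aa m k : ℂ) - σ, 0, 0, (cc m k : ℂ);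
         0, (aa m k : ℂ) - σ, (cc m k : ℂ), 0;
         (dd m ε : ℂ), 0, -(bb m ε : ℂ) - σ, 0;
         0, (dd m ε : ℂ), 0, -(bb m ε : ℂ) - σ] := by
  ext i j
  fin_cases i <;> fin_cases j <;>
    simp [A0, aa, bb, cc, dd, Matrix.one_apply]

private lemma eig_iff (m ε k : ℝ) (σ : ℂ) :
    IsEigC (A0 m ε k) σ ↔
      (σ^2 + ((bb m ε - aa m k : ℝ) : ℂ)*σ
          + ((-(aa m k * bb m ε) - cc m k * dd m ε : ℝ) : ℂ) = 0 ∨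
       σ^2 + ((bb m ε - aa m k : ℝ) : ℂ)*σ
          + ((-(aa m k * bb m ε) + cc m k * dd m ε : ℝ) : ℂ) = 0) := by
  unfold IsEigC
  rw [matrix_eq, det4, mul_eq_zero]
  push_cast
  tauto

/-- For `m > 0`, `ε > 0`, `k ≠ 0`: the matrix `A₀(k)` has an
eigenvalue with positive real part iff `m < 1`; when `0 < m < 1` there is exactly one
such eigenvalue and it is real (hence real and positive); when `m ≥ 1` every
eigenvalue has nonpositive real part. -/
theorem local_instability_iff_m_lt_one
    (m ε k : ℝ) (hm : 0 < m) (hε : 0 < ε) (hk : k ≠ 0) :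
    ((∃ σ : ℂ, IsEigC (A0 m ε k) σ ∧ 0 < σ.re) ↔ m < 1) ∧
    (m < 1 →
      (∃! σ : ℂ, IsEigC (A0 m ε k) σ ∧ 0 < σ.re) ∧
      (∀ σ : ℂ, IsEigC (A0 m ε k) σ → 0 < σ.re → σ.im = 0)) ∧
    (1 ≤ m → ∀ σ : ℂ, IsEigC (A0 m ε k) σ → σ.re ≤ 0) := by
  have hk2 : 0 < k ^ 2 := by positivity
  have h1m : (0:ℝ) < 1 + m := by linarith
  have h1m2 : (1:ℝ) < (1 + m) ^ 2 := by nlinarith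
  have ha : aa m k < 0 := by
    have : 1 / (1 + m) ^ 2 < 1 := (div_lt_one (by positivity)).2 h1m2
    exact mul_neg_of_neg_of_pos (by linarith) hk2
  have hb : 0 < bb m ε := by unfold bb; positivity
  have hc : cc m k < 0 := by
    have : 1 / (1 + m) < 1 := (div_lt_one h1m).2 (by linarith)
    unfold cc; nlinarith
  have hd : 0 < dd m ε := by unfold dd; positivity
  set B : ℝ := bb m ε - aa m k with hBdef
  set C1 : ℝ := -(aa m k * bb m ε) - cc m k * dd m ε with hC1def
  set C2 : ℝ := -(aa m k * bb m ε) + cc m k * dd m ε with hC2def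
  have hB : 0 < B := by rw [hBdef]; linarith
  have hC1 : 0 < C1 := by
    have h1 : aa m k * bb m ε < 0 := mul_neg_of_neg_of_pos ha hb
    have h2 : cc m k * dd m ε < 0 := mul_neg_of_neg_of_pos hc hd
    rw [hC1def]; linarith
  have hC2eq : C2 = k ^ 2 * m ^ 2 * (m - 1) / (ε * (1 + m) ^ 2) := by
    rw [hC2def]; unfold aa bb cc dd
    field_simp
    ring
  have hC2neg : m < 1 → C2 < 0 := by
    intro hm1
    rw [hC2eq]
    apply div_neg_of_neg_of_pos
    · have h0 : (0:ℝ) < k ^ 2 * m ^ 2 := by positivity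
      nlinarith
    · positivity
  have hC2nonneg : 1 ≤ m → 0 ≤ C2 := by
    intro hm1
    rw [hC2eq]
    apply div_nonneg
    · have h0 : (0:ℝ) < k ^ 2 * m ^ 2 := by positivity
      nlinarith
    · positivity
  have hnonpos : 1 ≤ m → ∀ σ : ℂ, IsEigC (A0 m ε k) σ → σ.re ≤ 0 := by
    intro hm1 σ hσ
    rcases (eig_iff m ε k σ).1 hσ with h | h
    · exact quad_re_nonpos B C1 hB hC1.le σ h
    · exact quad_re_nonpos B C2 hB (hC2nonneg hm1) σ h
  have hex : m < 1 → ∃ x : ℝ, 0 < x ∧ IsEigC (A0 m ε k) ((x:ℝ):ℂ) := by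
    intro hm1
    obtain ⟨x, hx, hxeq⟩ := quad_pos_root B C2 hB (hC2neg hm1)
    refine ⟨x, hx, (eig_iff m ε k x).2 (Or.inr ?_)⟩
    rw [hBdef, hC2def] at hxeq
    have : ((x ^ 2 + (bb m ε - aa m k) * x
        + (-(aa m k * bb m ε) + cc m k * dd m ε) : ℝ) : ℂ) = 0 := by
      exact_mod_cast congrArg (fun t : ℝ => (t : ℂ)) hxeq
    push_cast at this ⊢
    linear_combination this
  refine ⟨⟨?_, ?_⟩, ?_, hnonpos⟩
  · rintro ⟨σ, hσ, hre⟩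
    by_contra hm1
    push_neg at hm1
    exact absurd (hnonpos hm1 σ hσ) (not_le.2 hre)
  · intro hm1
    obtain ⟨x, hx, hxeig⟩ := hex hm1
    exact ⟨(x:ℂ), hxeig, by simpa using hx⟩
  · intro hm1
    obtain ⟨x, hx, hxeig⟩ := hex hm1
    have hximz : ∀ σ : ℂ, IsEigC (A0 m ε k) σ → 0 < σ.re → σ.im = 0 := by
      intro σ hσ hre
      rcases (eig_iff m ε k σ).1 hσ with h | h
      · exact absurd (quad_re_nonpos B C1 hB hC1.le σ h) (not_le.2 hre)
      · exact quad_im B hB C2 σ h hre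
    refine ⟨⟨(x:ℂ), ⟨hxeig, by simpa using hx⟩, ?_⟩, hximz⟩
    rintro σ ⟨hσ, hre⟩
    have hxre : (0:ℝ) < ((x:ℂ)).re := by simpa using hx
    rcases (eig_iff m ε k σ).1 hσ with h | h
    · exact absurd (quad_re_nonpos B C1 hB hC1.le σ h) (not_le.2 hre)
    · rcases (eig_iff m ε k ((x:ℝ):ℂ)).1 hxeig with h' | h'
      · exact absurd (quad_re_nonpos B C1 hB hC1.le _ h') (not_le.2 hxre)
      · exact quad_root_unique B C2 hB σ ((x:ℝ):ℂ) h h' hre hxre
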